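/- Let G be a countable amenable group and let L be a finite index subgroup of G which is congruent monotileable. If (U_n) is a congruent right Følner sequence of left monotiles of L and R is a complete set of right coset representatives of L in G (with 1_G ∈ R chosen as representative of L), then the sequence F_n := U_n R is a congruent right Følner sequence made of left monotiles of G. In particular, every countable amenable group with a congruent monotileable subgroup of finite index is congruent monotileable. -/

import Mathlib

open Filter Pointwise

/-- `(F n)` is a right Følner sequence: the sets are nonempty and
`|F_n g \ F_n|/|F_n| → 0` for every `g`. -/
def IsRightFolner {G : Type*} [Group G] [DecidableEq G] (F : ℕ → Finset G) : Prop :=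
  (∀ n, (F n).Nonempty) ∧
    ∀ g : G, Tendsto (fun n => (((F n).image (· * g) \ F n).card : ℝ) / ((F n).card : ℝ))
      atTop (nhds 0)

/-- `F` is a left monotile of `G`: some collection of left translates `{c • F : c ∈ C}`
partitions `G`. -/
def IsLeftMonotile {G : Type*} [Group G] (F : Finset G) : Prop :=
  ∃ C : Set G, C.PairwiseDisjoint (fun c => c • (F : Set G)) ∧
    ⋃ c ∈ C, c • (F : Set G) = Set.univ

/-- `(F n)` is a congruent sequence: `1 ∈ F 0` and for every `n` there is `J` with
`1 ∈ J` such that `{c • F n : c ∈ J}` partitions `F (n+1)`. -/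
def IsCongruentSeq {G : Type*} [Group G] [DecidableEq G] (F : ℕ → Finset G) : Prop :=
  (1 : G) ∈ F 0 ∧ ∀ n, ∃ J : Finset G, (1 : G) ∈ J ∧
    ((J : Set G)).PairwiseDisjoint (fun c => (c • F n : Finset G)) ∧
    J.biUnion (fun c => c • F n) = F (n + 1)

/-- `G` is congruent monotileable: it admits an exhaustive congruent right Følner
sequence made of left monotiles. -/
def CongruentMonotileable (G : Type*) [Group G] [DecidableEq G] : Prop :=
  ∃ F : ℕ → Finset G, IsRightFolner F ∧ IsCongruentSeq F ∧
    (∀ n, IsLeftMonotile (F n)) ∧ (⋃ n, (F n : Set G)) = Set.univ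

section Aux

variable {G : Type*} [Group G] [DecidableEq G] {L : Subgroup G} {R : Finset G}

private lemma key_unique (hR : ∀ g : G, ∃! r, r ∈ R ∧ g * r⁻¹ ∈ L)
    {l l' r r' : G} (hl : l ∈ L) (hl' : l' ∈ L) (hr : r ∈ R) (hr' : r' ∈ R)
    (h : l * r = l' * r') : r = r' ∧ l = l' := by
  obtain ⟨r₀, -, hu⟩ := hR (l * r)
  have h1 : r = r₀ := hu r ⟨hr, by simpa using hl⟩
  have h2 : r' = r₀ := hu r' ⟨hr', by rw [h]; simpa using hl'⟩
  have hrr : r = r' := h1.trans h2.symm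
  subst hrr
  exact ⟨rfl, mul_right_cancel h⟩

private lemma mem_UR {U : Finset L} {x : G} :
    x ∈ U.image ((↑·) : L → G) * R ↔ ∃ u ∈ U, ∃ r ∈ R, (u : G) * r = x := by
  simp only [Finset.mem_mul, Finset.mem_image]
  constructor
  · rintro ⟨y, ⟨u, hu, rfl⟩, r, hr, rfl⟩; exact ⟨u, hu, r, hr, rfl⟩
  · rintro ⟨u, hu, r, hr, rfl⟩; exact ⟨(u : G), ⟨u, hu, rfl⟩, r, hr, rfl⟩

private lemma card_UR (hR : ∀ g : G, ∃! r, r ∈ R ∧ g * r⁻¹ ∈ L) (U : Finset L) :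
    (U.image ((↑·) : L → G) * R).card = U.card * R.card := by
  have hinj : Function.Injective ((↑·) : L → G) := Subtype.val_injective
  rw [← Finset.card_image_of_injective U hinj]
  rw [Finset.card_mul_iff]
  rintro ⟨a, b⟩ hab ⟨a', b'⟩ hab' h
  simp only [Set.mem_prod, Finset.mem_coe, Finset.mem_image] at hab hab'
  obtain ⟨⟨u, -, rfl⟩, hb⟩ := hab
  obtain ⟨⟨u', -, rfl⟩, hb'⟩ := hab'
  obtain ⟨h1, h2⟩ := key_unique hR u.2 u'.2 hb hb' h
  exact Prod.ext h2 h1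

private lemma folner_UR (hR : ∀ g : G, ∃! r, r ∈ R ∧ g * r⁻¹ ∈ L) (h1R : (1 : G) ∈ R)
    {U : ℕ → Finset L} (hU : IsRightFolner U) :
    IsRightFolner (fun n => (U n).image ((↑·) : L → G) * R) := by
  obtain ⟨hne, hten⟩ := hU
  constructor
  · exact fun n => ((hne n).image _).mul ⟨1, h1R⟩
  · intro g
    have hρ : ∀ r : G, (hR (r * g)).exists.choose ∈ R ∧
        (r * g) * ((hR (r * g)).exists.choose)⁻¹ ∈ L := fun r => (hR (r * g)).exists.choose_spec
    set ρ : G → G := fun r => (hR (r * g)).exists.choose with hρdef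
    set lf : G → L := fun r => ⟨r * g * (ρ r)⁻¹, (hρ r).2⟩ with hlfdef
    have hdec : ∀ r : G, r * g = (lf r : G) * ρ r := by
      intro r
      simp only [hlfdef, inv_mul_cancel_right]
    -- the subset claim
    have hsub : ∀ n, ((U n).image ((↑·) : L → G) * R).image (· * g) \
        ((U n).image ((↑·) : L → G) * R) ⊆
        R.biUnion (fun r => (((U n).image (· * lf r) \ U n).image ((↑·) : L → G)).image
          (· * ρ r)) := by
      intro n x hx
      rw [Finset.mem_sdiff] at hx
      obtain ⟨hx1, hx2⟩ := hx
      rw [Finset.mem_image] at hx1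
      obtain ⟨y, hy, rfl⟩ := hx1
      rw [mem_UR] at hy
      obtain ⟨u, hu, r, hr, rfl⟩ := hy
      rw [Finset.mem_biUnion]
      refine ⟨r, hr, ?_⟩
      rw [Finset.mem_image]
      refine ⟨(u : G) * (lf r : G), ?_, by simp [mul_assoc]; exact (hdec r).symm⟩
      rw [Finset.mem_image]
      refine ⟨u * lf r, ?_, rfl⟩
      rw [Finset.mem_sdiff]
      constructor
      · exact Finset.mem_image_of_mem _ hu
      · intro hmem
        apply hx2
        rw [mem_UR]
        refine ⟨u * lf r, hmem, ρ r, (hρ r).1, ?_⟩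
        push_cast
        simp [mul_assoc]
        exact (hdec r).symm
    -- cardinality bound
    have hcard : ∀ n, (((((U n).image ((↑·) : L → G) * R).image (· * g)) \
        ((U n).image ((↑·) : L → G) * R)).card : ℝ) ≤
        ∑ r ∈ R, (((U n).image (· * lf r) \ U n).card : ℝ) := by
      intro n
      have h1 := Finset.card_le_card (hsub n)
      have h2 := Finset.card_biUnion_le (s := R)
        (t := fun r => (((U n).image (· * lf r) \ U n).image ((↑·) : L → G)).image (· * ρ r))
      have h3 : ∀ r : G, ((((U n).image (· * lf r) \ U n).image ((↑·) : L → G)).image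
          (· * ρ r)).card ≤ ((U n).image (· * lf r) \ U n).card := by
        intro r
        calc ((((U n).image (· * lf r) \ U n).image ((↑·) : L → G)).image (· * ρ r)).card
            ≤ (((U n).image (· * lf r) \ U n).image ((↑·) : L → G)).card :=
              Finset.card_image_le
          _ = ((U n).image (· * lf r) \ U n).card :=
              Finset.card_image_of_injective _ Subtype.val_injective
      push_cast
      exact_mod_cast (h1.trans h2).trans (Finset.sum_le_sum fun r _ => h3 r)
    -- squeeze
    have hU0 : ∀ n, (0 : ℝ) < ((U n).card : ℝ) := fun n =>
      Nat.cast_pos.mpr (Finset.card_pos.mpr (hne n))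
    have hR1 : (1 : ℝ) ≤ (R.card : ℝ) := by
      exact_mod_cast Nat.one_le_iff_ne_zero.mpr (Finset.card_ne_zero_of_mem h1R)
    refine squeeze_zero (g := fun n => ∑ r ∈ R,
        ((((U n).image (· * lf r) \ U n).card : ℝ) / ((U n).card : ℝ)))
      (fun n => div_nonneg (Nat.cast_nonneg _) (Nat.cast_nonneg _)) ?_ ?_
    · intro n
      rw [card_UR hR, Nat.cast_mul]
      calc (((((U n).image ((↑·) : L → G) * R).image (· * g)) \
            ((U n).image ((↑·) : L → G) * R)).card : ℝ) / (((U n).card : ℝ) * (R.card : ℝ))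
          ≤ (∑ r ∈ R, (((U n).image (· * lf r) \ U n).card : ℝ)) /
            (((U n).card : ℝ) * (R.card : ℝ)) := by
            apply div_le_div_of_nonneg_right (hcard n) ?_ |>.trans_eq rfl
            exact mul_nonneg (Nat.cast_nonneg _) (Nat.cast_nonneg _)
        _ ≤ (∑ r ∈ R, (((U n).image (· * lf r) \ U n).card : ℝ)) / ((U n).card : ℝ) := by
            apply div_le_div_of_nonneg_left ?_ (hU0 n) ?_
            · exact Finset.sum_nonneg fun r _ => Nat.cast_nonneg _
            · exact le_mul_of_one_le_right (hU0 n).le hR1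
        _ = ∑ r ∈ R, ((((U n).image (· * lf r) \ U n).card : ℝ) / ((U n).card : ℝ)) :=
            Finset.sum_div _ _ _
    · have := tendsto_finset_sum (f := fun (r : G) (n : ℕ) =>
        ((((U n).image (· * lf r) \ U n).card : ℝ) / ((U n).card : ℝ)))
        (a := fun _ => (0 : ℝ)) R (fun r _ => hten (lf r))
      simpa using this

private lemma mono_UR (hR : ∀ g : G, ∃! r, r ∈ R ∧ g * r⁻¹ ∈ L)
    {U : Finset L} (hU : IsLeftMonotile U) :
    IsLeftMonotile (U.image ((↑·) : L → G) * R) := by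
  obtain ⟨C, hCdisj, hCuniv⟩ := hU
  refine ⟨((↑·) : L → G) '' C, ?_, ?_⟩
  · rintro _ ⟨c, hc, rfl⟩ _ ⟨c', hc', rfl⟩ hne
    have hcc' : c ≠ c' := fun h => hne (by rw [h])
    simp only [Function.onFun]
    rw [Set.disjoint_left]
    rintro x hx hx'
    obtain ⟨y, hy, rfl⟩ := hx
    obtain ⟨y', hy', hxy⟩ := hx'
    rw [Finset.mem_coe, mem_UR] at hy hy'
    obtain ⟨u, hu, r, hr, rfl⟩ := hy
    obtain ⟨u', hu', r', hr', rfl⟩ := hy'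
    simp only [smul_eq_mul] at hxy
    rw [← mul_assoc, ← mul_assoc] at hxy
    obtain ⟨hrr, hll⟩ := key_unique hR (c' * u').2 (c * u).2 hr' hr hxy
    have : c' * u' = c * u := Subtype.val_injective hll
    have hdisj := hCdisj hc hc' hcc'
    simp only [Function.onFun] at hdisj
    rw [Set.disjoint_left] at hdisj
    refine hdisj (a := c * u) ⟨u, hu, rfl⟩ ⟨u', hu', this⟩
  · rw [Set.eq_univ_iff_forall]
    intro x
    obtain ⟨r, ⟨hrR, hrL⟩, -⟩ := hR x
    have hl : (⟨x * r⁻¹, hrL⟩ : L) ∈ ⋃ c ∈ C, c • (U : Set L) := by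
      rw [hCuniv]; trivial
    simp only [Set.mem_iUnion] at hl ⊢
    obtain ⟨c, hc, u, hu, hcu⟩ := hl
    refine ⟨(c : G), ⟨c, hc, rfl⟩, (u : G) * r, ?_, ?_⟩
    · rw [Finset.mem_coe, mem_UR]
      exact ⟨u, hu, r, hrR, rfl⟩
    · simp only [smul_eq_mul, Set.mem_smul_set] at hcu ⊢
      rw [← mul_assoc]
      have : ((c * u : L) : G) = x * r⁻¹ := by rw [hcu]
      push_cast at this
      rw [this, inv_mul_cancel_right]

private lemma smul_UR (j : L) (V : Finset L) :
    (↑j : G) • (V.image ((↑·) : L → G) * R) = ((j • V).image ((↑·) : L → G) * R) := by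
  rw [← smul_mul_assoc]
  congr 1
  ext x
  simp only [Finset.mem_smul_finset, Finset.mem_image, smul_eq_mul]
  constructor
  · rintro ⟨y, ⟨u, hu, rfl⟩, rfl⟩
    exact ⟨j * u, ⟨u, hu, rfl⟩, rfl⟩
  · rintro ⟨v, ⟨u, hu, rfl⟩, rfl⟩
    exact ⟨(u : G), ⟨u, hu, rfl⟩, rfl⟩

private lemma cong_UR (hR : ∀ g : G, ∃! r, r ∈ R ∧ g * r⁻¹ ∈ L) (h1R : (1 : G) ∈ R)
    {U : ℕ → Finset L} (hU : IsCongruentSeq U) :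
    IsCongruentSeq (fun n => (U n).image ((↑·) : L → G) * R) := by
  obtain ⟨h1, hJ⟩ := hU
  constructor
  · rw [mem_UR]
    exact ⟨1, h1, 1, h1R, by simp⟩
  · intro n
    obtain ⟨J, h1J, hdisj, hbi⟩ := hJ n
    refine ⟨J.image ((↑·) : L → G), Finset.mem_image.mpr ⟨1, h1J, rfl⟩, ?_, ?_⟩
    · rintro _ hc _ hc' hne
      simp only [Finset.coe_image, Set.mem_image, Finset.mem_coe] at hc hc'
      obtain ⟨j, hj, rfl⟩ := hc
      obtain ⟨j', hj', rfl⟩ := hc'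
      have hjj' : j ≠ j' := fun h => hne (by rw [h])
      simp only [Function.onFun]
      rw [Finset.disjoint_left]
      intro x hx hx'
      rw [Finset.mem_smul_finset] at hx hx'
      obtain ⟨y, hy, rfl⟩ := hx
      obtain ⟨y', hy', hxy⟩ := hx'
      rw [mem_UR] at hy hy'
      obtain ⟨u, hu, r, hr, rfl⟩ := hy
      obtain ⟨u', hu', r', hr', rfl⟩ := hy'
      simp only [smul_eq_mul] at hxy
      rw [← mul_assoc, ← mul_assoc] at hxy
      obtain ⟨hrr, hll⟩ := key_unique hR (j' * u').2 (j * u).2 hr' hr hxy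
      have heq : j' * u' = j * u := Subtype.val_injective hll
      have hd := hdisj (Finset.mem_coe.mpr hj) (Finset.mem_coe.mpr hj') hjj'
      simp only [Function.onFun] at hd
      rw [Finset.disjoint_left] at hd
      have hmem' : j * u ∈ j' • U n := by
        rw [← heq]; exact Finset.smul_mem_smul_finset hu'
      exact hd (Finset.smul_mem_smul_finset hu) hmem'
    · calc (J.image ((↑·) : L → G)).biUnion
            (fun c => c • ((U n).image ((↑·) : L → G) * R))
          = J.biUnion (fun j => (↑j : G) • ((U n).image ((↑·) : L → G) * R)) :=
            Finset.image_biUnion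
        _ = J.biUnion (fun j => ((j • U n).image ((↑·) : L → G) * R)) :=
            Finset.biUnion_congr rfl (fun j _ => smul_UR j (U n))
        _ = (J.biUnion fun j => (j • U n).image ((↑·) : L → G)) * R := by
            ext x
            simp only [Finset.mem_biUnion, Finset.mem_mul]
            constructor
            · rintro ⟨j, hj, y, hy, z, hz, rfl⟩
              exact ⟨y, ⟨j, hj, hy⟩, z, hz, rfl⟩
            · rintro ⟨y, ⟨j, hj, hy⟩, z, hz, rfl⟩
              exact ⟨j, hj, y, hy, z, hz, rfl⟩
        _ = ((J.biUnion fun j => j • U n).image ((↑·) : L → G)) * R := by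
            rw [Finset.biUnion_image]
        _ = (U (n + 1)).image ((↑·) : L → G) * R := by rw [hbi]

private lemma exhaustive_UR (hR : ∀ g : G, ∃! r, r ∈ R ∧ g * r⁻¹ ∈ L)
    {F : ℕ → Finset L} (hex : (⋃ n, (F n : Set L)) = Set.univ) :
    (⋃ n, (((F n).image ((↑·) : L → G) * R : Finset G) : Set G)) = Set.univ := by
  rw [Set.eq_univ_iff_forall]
  intro x
  obtain ⟨r, ⟨hrR, hrL⟩, -⟩ := hR x
  have hl : (⟨x * r⁻¹, hrL⟩ : L) ∈ ⋃ n, (F n : Set L) := by rw [hex]; trivial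
  simp only [Set.mem_iUnion, Finset.mem_coe] at hl ⊢
  obtain ⟨n, hn⟩ := hl
  refine ⟨n, ?_⟩
  rw [mem_UR]
  exact ⟨_, hn, r, hrR, by simp [inv_mul_cancel_right]⟩

end Aux

/-- if `L` is a finite index subgroup of the countable group `G`,
`(U n)` is a congruent right Følner sequence of left monotiles of `L`, and `R` is a
complete set of right coset representatives of `L` in `G` containing `1`, then
`F n := U n · R` is a congruent right Følner sequence made of left monotiles of `G`.
In particular, if `L` is congruent monotileable then so is `G`. -/
theorem congruentMonotileable_of_finiteIndex {G : Type*} [Group G] [Countable G]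
    [DecidableEq G] (L : Subgroup G) [L.FiniteIndex]
    (U : ℕ → Finset L)
    (hUfolner : IsRightFolner U) (hUcong : IsCongruentSeq U)
    (hUmono : ∀ n, IsLeftMonotile (U n))
    (R : Finset G) (h1R : (1 : G) ∈ R)
    (hR : ∀ g : G, ∃! r, r ∈ R ∧ g * r⁻¹ ∈ L) :
    (IsRightFolner (fun n => (U n).image ((↑·) : L → G) * R) ∧
      IsCongruentSeq (fun n => (U n).image ((↑·) : L → G) * R) ∧
      (∀ n, IsLeftMonotile ((U n).image ((↑·) : L → G) * R))) ∧
    (CongruentMonotileable L → CongruentMonotileable G) := by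
  refine ⟨⟨folner_UR hR h1R hUfolner, cong_UR hR h1R hUcong,
    fun n => mono_UR hR (hUmono n)⟩, ?_⟩
  rintro ⟨F, hF1, hF2, hF3, hF4⟩
  exact ⟨fun n => (F n).image ((↑·) : L → G) * R, folner_UR hR h1R hF1,
    cong_UR hR h1R hF2, fun n => mono_UR hR (hF3 n), exhaustive_UR hR hF4⟩
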